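/- Let H be a Hilbert space, φ ∈ C¹(H) with φ(u) = ‖u‖²/2 − ψ(u), and suppose that for all u with ‖u‖ ≥ 1 and φ(u) = c one has φ'(u)(u) < 0, and that for each u in the unit sphere S, μ ↦ φ(μu) tends to −∞ as μ → ∞ and φ(μu) > c for μ = 1. Then there exists a unique continuous function ρ : S → (1, ∞) such that for μ > 1: φ(μu) > c if μ < ρ(u), φ(μu) = c if μ = ρ(u), and φ(μu) < c if μ > ρ(u). -/

import Mathlib

open Filter Set

lemma one_dim (g g' : ℝ → ℝ) (c : ℝ)
    (hderiv : ∀ t, HasDerivAt g (g' t) t)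
    (hneg : ∀ t, 1 ≤ t → g t = c → g' t < 0)
    (h1 : c < g 1)
    (hbot : Tendsto g atTop atBot) :
    1 < sInf {t | 1 ≤ t ∧ g t = c} ∧
    g (sInf {t | 1 ≤ t ∧ g t = c}) = c ∧
    (∀ μ, 1 ≤ μ → μ < sInf {t | 1 ≤ t ∧ g t = c} → c < g μ) ∧
    (∀ μ, sInf {t | 1 ≤ t ∧ g t = c} < μ → g μ < c) := by
  have cont : Continuous g := by
    rw [continuous_iff_continuousAt]; exact fun t => (hderiv t).continuousAt
  set A : Set ℝ := {t | 1 ≤ t ∧ g t = c} with hA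
  have hclosed : IsClosed A := by
    have : A = Ici 1 ∩ g ⁻¹' {c} := by ext t; simp [hA, mem_Ici]
    rw [this]
    exact isClosed_Ici.inter (isClosed_singleton.preimage cont)
  have hbdd : BddBelow A := ⟨1, fun t ht => ht.1⟩
  have hne : A.Nonempty := by
    obtain ⟨M, hM⟩ := ((hbot.eventually (eventually_lt_atBot c)).and
      (eventually_ge_atTop 1)).exists
    have := intermediate_value_Icc' hM.2 cont.continuousOn
    obtain ⟨t, htI, htc⟩ := this ⟨hM.1.le, h1.le⟩
    exact ⟨t, htI.1, htc⟩
  set r := sInf A with hr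
  have hrA : r ∈ A := hclosed.csInf_mem hne hbdd
  have hr1 : 1 < r := by
    rcases lt_or_eq_of_le hrA.1 with h | h
    · exact h
    · exact absurd hrA.2 (by rw [← h]; exact fun hc => absurd hc.symm (ne_of_lt h1))
  -- right and left local behavior at crossings
  have hright : ∀ a, 1 ≤ a → g a = c → ∀ᶠ t in nhdsWithin a (Ioi a), g t < c := by
    intro a ha hac
    have hslope := hasDerivAt_iff_tendsto_slope.mp (hderiv a)
    have hev : ∀ᶠ t in nhdsWithin a {a}ᶜ, slope g a t < 0 :=
      hslope.eventually (eventually_lt_nhds (hneg a ha hac))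
    have : ∀ᶠ t in nhdsWithin a (Ioi a), slope g a t < 0 :=
      hev.filter_mono (nhdsWithin_mono a fun t ht => ne_of_gt ht)
    filter_upwards [this, self_mem_nhdsWithin] with t ht hta
    rw [slope_def_field] at ht
    have hta' : 0 < t - a := sub_pos.mpr (mem_Ioi.mp hta)
    have h2 : g t - g a < 0 := by
      rcases div_neg_iff.mp ht with ⟨h, h'⟩ | ⟨h, h'⟩ <;> linarith
    linarith [hac ▸ h2]
  have hleft : ∀ a, 1 ≤ a → g a = c → ∀ᶠ t in nhdsWithin a (Iio a), c < g t := by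
    intro a ha hac
    have hslope := hasDerivAt_iff_tendsto_slope.mp (hderiv a)
    have hev : ∀ᶠ t in nhdsWithin a {a}ᶜ, slope g a t < 0 :=
      hslope.eventually (eventually_lt_nhds (hneg a ha hac))
    have : ∀ᶠ t in nhdsWithin a (Iio a), slope g a t < 0 :=
      hev.filter_mono (nhdsWithin_mono a fun t ht => ne_of_lt ht)
    filter_upwards [this, self_mem_nhdsWithin] with t ht hta
    rw [slope_def_field] at ht
    have h2 : 0 < g t - g a := by
      have hta' : t - a < 0 := sub_neg.mpr (mem_Iio.mp hta)
      rcases div_neg_iff.mp ht with ⟨h, h'⟩ | ⟨h, h'⟩ <;> linarith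
    linarith [hac ▸ h2]
  refine ⟨hr1, hrA.2, ?_, ?_⟩
  · intro μ hμ1 hμr
    rcases lt_trichotomy (g μ) c with h | h | h
    · obtain ⟨t, htI, htc⟩ := intermediate_value_Icc' hμ1 cont.continuousOn ⟨h.le, h1.le⟩
      exact absurd (csInf_le hbdd ⟨htI.1, htc⟩) (not_le.mpr (lt_of_le_of_lt htI.2 hμr))
    · exact absurd (csInf_le hbdd ⟨hμ1, h⟩) (not_le.mpr hμr)
    · exact h
  · intro μ hμr
    by_contra hcon
    push_neg at hcon
    -- find t₁ ∈ (r, μ) with g t₁ < c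
    have hIoo : Ioo r μ ∈ nhdsWithin r (Ioi r) := Ioo_mem_nhdsGT_of_mem ⟨le_refl r, hμr⟩
    obtain ⟨t₁, ht₁lt, ht₁I⟩ := ((hright r hrA.1 hrA.2).and
      (eventually_of_mem hIoo fun t ht => ht)).exists
    set B : Set ℝ := {t | t ∈ Icc t₁ μ ∧ g t = c} with hB
    have hBclosed : IsClosed B := by
      have : B = Icc t₁ μ ∩ g ⁻¹' {c} := by ext t; simp [hB]
      rw [this]; exact isClosed_Icc.inter (isClosed_singleton.preimage cont)
    have hBne : B.Nonempty := by
      obtain ⟨t, htI, htc⟩ := intermediate_value_Icc (le_of_lt ht₁I.2) cont.continuousOn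
        ⟨ht₁lt.le, hcon⟩
      exact ⟨t, htI, htc⟩
    have hBbdd : BddBelow B := ⟨t₁, fun t ht => ht.1.1⟩
    set s := sInf B with hs
    have hsB : s ∈ B := hBclosed.csInf_mem hBne hBbdd
    have hs1 : 1 ≤ s := le_trans hr1.le (le_trans ht₁I.1.le hsB.1.1)
    have ht₁s : t₁ < s := by
      rcases lt_or_eq_of_le hsB.1.1 with h | h
      · exact h
      · exact absurd hsB.2 (by rw [← h]; exact ne_of_lt ht₁lt)
    have hIoo2 : Ioo t₁ s ∈ nhdsWithin s (Iio s) := Ioo_mem_nhdsLT_of_mem ⟨ht₁s, le_refl s⟩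
    obtain ⟨t₂, ht₂gt, ht₂I⟩ := ((hleft s hs1 hsB.2).and
      (eventually_of_mem hIoo2 fun t ht => ht)).exists
    obtain ⟨t₃, ht₃I, ht₃c⟩ := intermediate_value_Icc (le_of_lt ht₂I.1) cont.continuousOn
      ⟨ht₁lt.le, ht₂gt.le⟩
    have : s ≤ t₃ := csInf_le hBbdd ⟨⟨ht₃I.1, le_trans ht₃I.2 (le_trans ht₂I.2.le hsB.1.2)⟩, ht₃c⟩
    linarith [ht₃I.2, ht₂I.2]

/-- Implicit-function step for critical groups at infinity: if `φ(u) = ‖u‖²/2 − ψ(u)` is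
`C¹` on a Hilbert space, the radial derivative `φ'(u)(u)` is negative on the level set
`{φ = c}` outside the unit ball, `φ(μu) → −∞` along each ray, and `φ > c` on the unit
sphere, then there is a unique continuous `ρ : S → (1,∞)` such that for `μ > 1`:
`φ(μu) > c` iff `μ < ρ(u)`, `φ(μu) = c` iff `μ = ρ(u)`, `φ(μu) < c` iff `μ > ρ(u)`. -/
theorem stmt_13 {H : Type*} [NormedAddCommGroup H] [InnerProductSpace ℝ H]
    (φ ψ : H → ℝ) (c : ℝ)
    (hφ : ContDiff ℝ 1 φ)
    (hφψ : ∀ u : H, φ u = ‖u‖ ^ 2 / 2 - ψ u)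
    (hrad : ∀ u : H, 1 ≤ ‖u‖ → φ u = c → fderiv ℝ φ u u < 0)
    (hray : ∀ u ∈ Metric.sphere (0 : H) 1,
      Tendsto (fun μ : ℝ => φ (μ • u)) atTop atBot)
    (hS : ∀ u ∈ Metric.sphere (0 : H) 1, c < φ u) :
    ∃ ρ : H → ℝ,
      (ContinuousOn ρ (Metric.sphere (0 : H) 1) ∧
        (∀ u ∈ Metric.sphere (0 : H) 1, 1 < ρ u) ∧
        (∀ u ∈ Metric.sphere (0 : H) 1, ∀ μ : ℝ, 1 < μ →
          (μ < ρ u → c < φ (μ • u)) ∧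
          (μ = ρ u → φ (μ • u) = c) ∧
          (ρ u < μ → φ (μ • u) < c))) ∧
      -- uniqueness
      (∀ ρ' : H → ℝ,
        (ContinuousOn ρ' (Metric.sphere (0 : H) 1) ∧
          (∀ u ∈ Metric.sphere (0 : H) 1, 1 < ρ' u) ∧
          (∀ u ∈ Metric.sphere (0 : H) 1, ∀ μ : ℝ, 1 < μ →
            (μ < ρ' u → c < φ (μ • u)) ∧
            (μ = ρ' u → φ (μ • u) = c) ∧
            (ρ' u < μ → φ (μ • u) < c))) →
        ∀ u ∈ Metric.sphere (0 : H) 1, ρ' u = ρ u) := by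
  classical
  set S := Metric.sphere (0 : H) 1 with hs
  set ρ : H → ℝ := fun u => sInf {t | 1 ≤ t ∧ φ (t • u) = c} with hρ
  have hdφ : Differentiable ℝ φ := hφ.differentiable one_ne_zero
  -- key facts per point of the sphere
  have key : ∀ u ∈ S, 1 < ρ u ∧ φ (ρ u • u) = c ∧
      (∀ μ, 1 ≤ μ → μ < ρ u → c < φ (μ • u)) ∧
      (∀ μ, ρ u < μ → φ (μ • u) < c) := by
    intro u hu
    have hnorm : ‖u‖ = 1 := by simpa using mem_sphere_zero_iff_norm.mp hu
    have hderiv : ∀ t : ℝ, HasDerivAt (fun μ : ℝ => φ (μ • u)) (fderiv ℝ φ (t • u) u) t := by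
      intro t
      have h1 : HasDerivAt (fun μ : ℝ => μ • u) u t := by
        simpa using (hasDerivAt_id t).smul_const u
      exact (hdφ (t • u)).hasFDerivAt.comp_hasDerivAt t h1
    have hneg : ∀ t : ℝ, 1 ≤ t → φ (t • u) = c → fderiv ℝ φ (t • u) u < 0 := by
      intro t ht htc
      have hnt : ‖t • u‖ = t := by
        rw [norm_smul, hnorm, mul_one, Real.norm_eq_abs, abs_of_pos (by linarith)]
      have h := hrad (t • u) (by rw [hnt]; exact ht) htc
      rw [show (t : ℝ) • u = t • u from rfl] at h
      have h2 : (fderiv ℝ φ (t • u)) (t • u) = t * (fderiv ℝ φ (t • u)) u := by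
        rw [map_smul]; simp
      rw [h2] at h
      nlinarith [h, lt_of_lt_of_le zero_lt_one ht]
    have h1 : c < (fun μ : ℝ => φ (μ • u)) 1 := by simpa using hS u hu
    exact one_dim _ _ c hderiv hneg h1 (hray u hu)
  have hρ1 : ∀ u ∈ S, 1 < ρ u := fun u hu => (key u hu).1
  have htri : ∀ u ∈ S, ∀ μ : ℝ, 1 < μ →
      (μ < ρ u → c < φ (μ • u)) ∧ (μ = ρ u → φ (μ • u) = c) ∧ (ρ u < μ → φ (μ • u) < c) := by
    intro u hu μ hμ
    obtain ⟨h1, h2, h3, h4⟩ := key u hu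
    exact ⟨fun h => h3 μ hμ.le h, fun h => h ▸ h2, h4 μ⟩
  have hcont : ContinuousOn ρ S := by
    intro u₀ hu₀
    obtain ⟨h1, h2, h3, h4⟩ := key u₀ hu₀
    rw [ContinuousWithinAt]
    apply tendsto_order.2
    constructor
    · intro a ha
      rcases le_or_gt a 1 with h | h
      · filter_upwards [self_mem_nhdsWithin] with u hu
        exact lt_of_le_of_lt h (hρ1 u hu)
      · have hgt : c < φ (a • u₀) := h3 a h.le ha
        have hopen : IsOpen {x : H | c < φ (a • x)} :=
          isOpen_lt continuous_const (hφ.continuous.comp (continuous_const_smul a))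
        filter_upwards [Filter.Eventually.filter_mono nhdsWithin_le_nhds
          (hopen.eventually_mem hgt), self_mem_nhdsWithin] with u hu huS
        by_contra hle
        push_neg at hle
        rcases lt_or_eq_of_le hle with hlt | heq
        · exact absurd ((htri u huS a h).2.2 hlt) (not_lt.mpr (le_of_lt hu))
        · exact absurd ((htri u huS a h).2.1 heq.symm) (ne_of_gt hu)
    · intro b hb
      have hb1 : 1 < b := lt_trans h1 hb
      have hlt : φ (b • u₀) < c := h4 b hb
      have hopen : IsOpen {x : H | φ (b • x) < c} :=
        isOpen_lt (hφ.continuous.comp (continuous_const_smul b)) continuous_const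
      filter_upwards [Filter.Eventually.filter_mono nhdsWithin_le_nhds
        (hopen.eventually_mem hlt), self_mem_nhdsWithin] with u hu huS
      by_contra hle
      push_neg at hle
      rcases lt_or_eq_of_le hle with hlt' | heq
      · exact absurd ((htri u huS b hb1).1 hlt') (not_lt.mpr (le_of_lt hu))
      · exact absurd ((htri u huS b hb1).2.1 heq) (ne_of_lt hu)
  refine ⟨ρ, ⟨hcont, hρ1, htri⟩, ?_⟩
  rintro ρ' ⟨-, hρ'1, htri'⟩ u hu
  have h1 := hρ'1 u hu
  have hc : φ (ρ' u • u) = c := (htri' u hu (ρ' u) h1).2.1 rfl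
  rcases lt_trichotomy (ρ' u) (ρ u) with h | h | h
  · exact absurd hc (ne_of_gt ((htri u hu (ρ' u) h1).1 h))
  · exact h
  · exact absurd hc (ne_of_lt ((htri u hu (ρ' u) h1).2.2 h))
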